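/- Let (δ,μ) be a left cellular pair and w ∈ W. Then ℒ(δ(w)) = ℒ(w), where ℒ(w) = {s ∈ S : ℓ(sw) < ℓ(w)} is the left descent set. Symmetrically, if (δ,μ) is a right cellular pair then ℛ(δ(w)) = ℛ(w), where ℛ(w) = {s ∈ S : ℓ(ws) < ℓ(w)}. -/

import Mathlib

open scoped Classical

noncomputable section

namespace CellsCacti

/-- The group algebra `A = ℤ[𝔄]` of a totally ordered abelian group `𝔄`,
written exponentially: `A = ⊕_{a ∈ 𝔄} ℤ vᵃ`. -/
abbrev GA (𝔄 : Type*) [AddCommGroup 𝔄] [LinearOrder 𝔄] [IsOrderedAddMonoid 𝔄] := AddMonoidAlgebra ℤ 𝔄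

variable {𝔄 : Type*} [AddCommGroup 𝔄] [LinearOrder 𝔄] [IsOrderedAddMonoid 𝔄]

/-- The element `vᵃ` of `A = ℤ[𝔄]`. -/
def v (a : 𝔄) : GA 𝔄 := AddMonoidAlgebra.single a 1

/-- The bar involution of `A = ℤ[𝔄]`, determined by `vᵃ ↦ v⁻ᵃ`. -/
def Abar : GA 𝔄 ≃ₐ[ℤ] GA 𝔄 := AddMonoidAlgebra.domCongr ℤ ℤ (AddEquiv.neg 𝔄)

/-- `A_{<0} = ⊕_{a<0} ℤ vᵃ`, as a predicate on elements of `A`. -/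
def Aneg (a : GA 𝔄) : Prop := ∀ γ ∈ a.coeff.support, γ < (0 : 𝔄)


lemma v_mul (γ δ : 𝔄) : v γ * v δ = v (γ + δ) := by
  simp [v, AddMonoidAlgebra.single_mul_single]

lemma v_apply (γ δ : 𝔄) : (v γ).coeff δ = if γ = δ then 1 else 0 := by
  simp [v, AddMonoidAlgebra.coeff_single_apply, Finsupp.single_apply]

lemma v_apply_self (γ : 𝔄) : (v γ).coeff γ = 1 := by simp [v_apply]

lemma v_apply_ne {γ δ : 𝔄} (hne : γ ≠ δ) : (v γ).coeff δ = 0 := by simp [v_apply, hne]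

lemma v_zero : (v (0 : 𝔄)) = 1 := by
  rw [v]; exact rfl

lemma Abar_apply (a : GA 𝔄) (γ : 𝔄) : (Abar a).coeff γ = a.coeff (-γ) := by
  simp [Abar]

lemma Abar_v (γ : 𝔄) : Abar (v γ) = v (-γ) := by
  simp [Abar, v]

lemma Aneg_apply {a : GA 𝔄} (h : Aneg a) {γ : 𝔄} (hγ : 0 ≤ γ) : a.coeff γ = 0 := by
  by_contra hc
  exact absurd (h γ (Finsupp.mem_support_iff.mpr hc)) (not_lt.mpr hγ)

lemma Aneg_zero : Aneg (0 : GA 𝔄) := by intro γ hγ; simp at hγ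

lemma Aneg_iff {a : GA 𝔄} : Aneg a ↔ ∀ γ : 𝔄, 0 ≤ γ → a.coeff γ = 0 := by
  constructor
  · intro h γ hγ; exact Aneg_apply h hγ
  · intro h γ hγ
    by_contra hc
    exact (Finsupp.mem_support_iff.mp hγ) (h γ (not_lt.mp hc))

lemma Aneg_add {a b : GA 𝔄} (ha : Aneg a) (hb : Aneg b) : Aneg (a + b) := by
  rw [Aneg_iff] at *
  intro γ hγ
  rw [AddMonoidAlgebra.coeff_add, Finsupp.add_apply, ha γ hγ, hb γ hγ, add_zero]

lemma Aneg_neg {a : GA 𝔄} (ha : Aneg a) : Aneg (-a) := by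
  rw [Aneg_iff] at *
  intro γ hγ
  rw [AddMonoidAlgebra.coeff_neg, Finsupp.neg_apply, ha γ hγ, neg_zero]

lemma Aneg_sub {a b : GA 𝔄} (ha : Aneg a) (hb : Aneg b) : Aneg (a - b) := by
  rw [sub_eq_add_neg]; exact Aneg_add ha (Aneg_neg hb)

lemma Aneg_v_neg {γ : 𝔄} (hγ : 0 < γ) : Aneg (v (-γ)) := by
  rw [Aneg_iff]
  intro δ hδ
  exact v_apply_ne (fun he => absurd (he ▸ (neg_neg_iff_pos.mpr hγ)) (not_lt.mpr hδ)) 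

lemma Aneg_bar_invariant_eq_zero {a : GA 𝔄} (ha : Aneg a) (hbar : Abar a = a) : a = 0 := by
  ext γ
  rcases le_or_gt 0 γ with hγ | hγ
  · rw [Aneg_apply ha hγ]; rfl
  · have : a.coeff γ = a.coeff (-γ) := by rw [← Abar_apply, hbar]
    rw [this, Aneg_apply ha (by simpa using hγ.le : (0:𝔄) ≤ -γ)]; rfl

/-- The bar-invariant "completion" of `c`: `sym c γ = c |γ|`. -/
def sym (c : GA 𝔄) : GA 𝔄 :=
  AddMonoidAlgebra.ofCoeff <| Finsupp.onFinset (c.coeff.support ∪ c.coeff.support.image (fun γ => -γ)) (fun γ => c.coeff |γ|)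
    (by
      intro γ hγ
      rcases le_or_gt 0 γ with h | h
      · rw [abs_of_nonneg h] at hγ
        exact Finset.mem_union_left _ (Finsupp.mem_support_iff.mpr hγ)
      · rw [abs_of_neg h] at hγ
        refine Finset.mem_union_right _ ?_
        simp only [Finset.mem_image]
        exact ⟨-γ, Finsupp.mem_support_iff.mpr hγ, neg_neg γ⟩)

lemma sym_apply (c : GA 𝔄) (γ : 𝔄) : (sym c).coeff γ = c.coeff |γ| := rfl

lemma Abar_sym (c : GA 𝔄) : Abar (sym c) = sym c := by
  ext γ
  rw [Abar_apply]
  show (sym c).coeff (-γ) = (sym c).coeff γ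
  rw [sym_apply, sym_apply, abs_neg]

lemma Aneg_sub_sym (c : GA 𝔄) : Aneg (c - sym c) := by
  rw [Aneg_iff]
  intro γ hγ
  rw [AddMonoidAlgebra.coeff_sub, Finsupp.sub_apply]
  show c.coeff γ - (sym c).coeff γ = 0
  rw [sym_apply, abs_of_nonneg hγ, sub_self]


variable {B : Type*} {W : Type*} [Group W] {M : CoxeterMatrix B}

/-- The Iwahori–Hecke algebra `H = H(W,S,φ)` of a Coxeter system `(W,S)` (encoded by
a Mathlib `CoxeterSystem`) with weight function `φ`, together with its standard basis
`(T_w)`, the bar involution, and the Kazhdan–Lusztig basis `(C_w)`.  `H` is a ring and a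
module over `A = ℤ[𝔄]`, the two structures being compatible. -/
structure Hecke (cs : CoxeterSystem M W) (𝔄 : Type*) [AddCommGroup 𝔄] [LinearOrder 𝔄] [IsOrderedAddMonoid 𝔄]
    (φ : B → 𝔄) (H : Type*) [Ring H] [Module (GA 𝔄) H] : Type _ where
  /-- `φ` is a positive weight function. -/
  φ_pos : ∀ i : B, 0 < φ i
  /-- `φ` is constant on conjugacy classes of simple reflections. -/
  φ_conj : ∀ i j : B, (∃ w : W, w * cs.simple i * w⁻¹ = cs.simple j) → φ i = φ j
  /-- Scalars commute with left multiplication. -/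
  smul_mul : ∀ (a : GA 𝔄) (x y : H), (a • x) * y = a • (x * y)
  /-- Scalars commute with right multiplication. -/
  mul_smul : ∀ (a : GA 𝔄) (x y : H), x * (a • y) = a • (x * y)
  /-- The standard basis `(T_w)_{w ∈ W}` of `H`. -/
  T : Module.Basis W (GA 𝔄) H
  T_one : T 1 = 1
  /-- `T_w T_{w'} = T_{w w'}` when lengths add. -/
  T_mul : ∀ w w' : W, cs.length (w * w') = cs.length w + cs.length w' →
    T w * T w' = T (w * w')
  /-- The quadratic relation `(T_s - v^{φ(s)})(T_s + v^{-φ(s)}) = 0`. -/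
  T_quad : ∀ i : B,
    (T (cs.simple i) - v (φ i) • 1) * (T (cs.simple i) + v (-(φ i)) • 1) = 0
  /-- The bar involution of `H`, an `Abar`-semilinear involutive ring automorphism
  with `bar T_w = T_{w⁻¹}⁻¹` (equivalently, determined by its values on the `T_s`). -/
  bar : H ≃+ H
  bar_mul : ∀ x y : H, bar (x * y) = bar x * bar y
  bar_smul : ∀ (a : GA 𝔄) (x : H), bar (a • x) = Abar a • bar x
  bar_invol : ∀ x : H, bar (bar x) = x
  bar_T : ∀ i : B, bar (T (cs.simple i)) = T (cs.simple i) + (v (-(φ i)) - v (φ i)) • 1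
  /-- The Kazhdan–Lusztig basis `(C_w)_{w ∈ W}` of `H`. -/
  C : Module.Basis W (GA 𝔄) H
  /-- Each `C_w` is invariant under the bar involution. -/
  C_bar : ∀ w : W, bar (C w) = C w
  /-- `C_w ≡ T_w` modulo `H_{<0} = ⊕_w A_{<0} T_w`. -/
  C_T : ∀ w u : W, Aneg (T.repr (C w - T w) u)

namespace Hecke

variable {cs : CoxeterSystem M W} {φ : B → 𝔄} {H : Type*} [Ring H] [Module (GA 𝔄) H]

/-- The standard parabolic subgroup `W_I`, as a subset of `W`. -/
def parab (cs : CoxeterSystem M W) (I : Set B) : Set W :=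
  (Subgroup.closure (cs.simple '' I) : Subgroup W)

/-- `x ∈ X_I`: `x` has minimal length in the coset `x W_I`. -/
def IsMinRep (cs : CoxeterSystem M W) (I : Set B) (x : W) : Prop :=
  ∀ u ∈ parab cs I, cs.length x ≤ cs.length (x * u)

/-- The `A`-span of the `C_w` for `w` in a subset `P ⊆ W`; for `P = W_I` this is the
parabolic subalgebra `H_I` (whose Kazhdan–Lusztig basis is `(C_w)_{w ∈ W_I}`). -/
def Cspan (h : Hecke cs 𝔄 φ H) (P : Set W) : Submodule (GA 𝔄) H :=
  Submodule.span (GA 𝔄) (h.C '' P)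

/-- The `A`-span of the `T_w` for `w` in a subset `P ⊆ W`; for `P = W_I` this is the
parabolic subalgebra `H_I`. -/
def Tspan (h : Hecke cs 𝔄 φ H) (P : Set W) : Submodule (GA 𝔄) H :=
  Submodule.span (GA 𝔄) (h.T '' P)

/-- The preorder `≤_L` of `(W_P, P, φ_P)` (take `P = Set.univ` for that of `(W,S,φ)`):
the finest preorder such that each `⊕_{x ≤_L w} A C_x` is a left ideal. -/
def leftLE (h : Hecke cs 𝔄 φ H) (P : Set W) : W → W → Prop :=
  Relation.ReflTransGen
    (fun x y => x ∈ P ∧ y ∈ P ∧ ∃ a ∈ h.Cspan P, h.C.repr (a * h.C y) x ≠ 0)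

/-- The preorder `≤_R`. -/
def rightLE (h : Hecke cs 𝔄 φ H) (P : Set W) : W → W → Prop :=
  Relation.ReflTransGen
    (fun x y => x ∈ P ∧ y ∈ P ∧ ∃ a ∈ h.Cspan P, h.C.repr (h.C y * a) x ≠ 0)

/-- The preorder `≤_LR`. -/
def lrLE (h : Hecke cs 𝔄 φ H) (P : Set W) : W → W → Prop :=
  Relation.ReflTransGen
    (fun x y => x ∈ P ∧ y ∈ P ∧
      ∃ a ∈ h.Cspan P, ∃ b ∈ h.Cspan P, h.C.repr (a * h.C y * b) x ≠ 0)

/-- The equivalence `∼_L`; its classes are the left cells. -/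
def leftEquiv (h : Hecke cs 𝔄 φ H) (P : Set W) (x y : W) : Prop :=
  h.leftLE P x y ∧ h.leftLE P y x

/-- The equivalence `∼_R`; its classes are the right cells. -/
def rightEquiv (h : Hecke cs 𝔄 φ H) (P : Set W) (x y : W) : Prop :=
  h.rightLE P x y ∧ h.rightLE P y x

/-- The equivalence `∼_LR`; its classes are the two-sided cells. -/
def lrEquiv (h : Hecke cs 𝔄 φ H) (P : Set W) (x y : W) : Prop :=
  h.lrLE P x y ∧ h.lrLE P y x

/-- `Γ` is a left cell. -/
def IsLeftCell (h : Hecke cs 𝔄 φ H) (P : Set W) (Γ : Set W) : Prop :=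
  ∃ w ∈ P, Γ = {x | h.leftEquiv P x w}

/-- `Γ` is a right cell. -/
def IsRightCell (h : Hecke cs 𝔄 φ H) (P : Set W) (Γ : Set W) : Prop :=
  ∃ w ∈ P, Γ = {x | h.rightEquiv P x w}

/-- A sign map `W → {1,-1}`. -/
def IsSignMap (μ : W → ℤ) : Prop := ∀ w : W, μ w = 1 ∨ μ w = -1

/-- `(δ,μ)` is a *left cellular pair* for `(W_P, P, φ_P)` (Definition 4.1 of the paper;
take `P = Set.univ` for `(W,S,φ)`):  for every left cell `Γ`, (LC1) `δ(Γ)` is a left cell,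
and (LC2) the `A`-linear map `H^L[Γ] → H^L[δ(Γ)]`, `c_w^L ↦ μ_w c_{δ(w)}^L`, is an
isomorphism of left `H`-modules.  Condition (LC2) is expressed concretely: `δ` is injective
on `Γ` (bijectivity of the map) and for every `a ∈ H` the coefficient of `c_{w'}` in
`a ⬝ c_w` agrees, up to the signs, with that of `c_{δ(w')}` in `a ⬝ c_{δ(w)}`
(`H`-equivariance in the cell modules). -/
def IsLeftCellularPair (h : Hecke cs 𝔄 φ H) (P : Set W) (δ : W → W) (μ : W → ℤ) : Prop :=
  IsSignMap μ ∧
  ∀ Γ : Set W, h.IsLeftCell P Γ →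
    h.IsLeftCell P (δ '' Γ) ∧ Set.InjOn δ Γ ∧
    ∀ a ∈ h.Cspan P, ∀ w ∈ Γ, ∀ w' ∈ Γ,
      h.C.repr (a * h.C w) w' = (μ w * μ w') • h.C.repr (a * h.C (δ w)) (δ w')

/-- `(δ,μ)` is a *right cellular pair*. -/
def IsRightCellularPair (h : Hecke cs 𝔄 φ H) (P : Set W) (δ : W → W) (μ : W → ℤ) : Prop :=
  IsSignMap μ ∧
  ∀ Γ : Set W, h.IsRightCell P Γ →
    h.IsRightCell P (δ '' Γ) ∧ Set.InjOn δ Γ ∧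
    ∀ a ∈ h.Cspan P, ∀ w ∈ Γ, ∀ w' ∈ Γ,
      h.C.repr (h.C w * a) w' = (μ w * μ w') • h.C.repr (h.C (δ w) * a) (δ w')

/-- `(δ,μ)` is a *strongly left cellular pair*: left cellular, and (LC3) `δ(w) ∼_R w`. -/
def IsStronglyLeftCellularPair (h : Hecke cs 𝔄 φ H) (P : Set W) (δ : W → W) (μ : W → ℤ) :
    Prop :=
  h.IsLeftCellularPair P δ μ ∧ ∀ w ∈ P, h.rightEquiv P (δ w) w

/-- `(δ,μ)` is a *strongly right cellular pair*: right cellular, and `δ(w) ∼_L w`. -/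
def IsStronglyRightCellularPair (h : Hecke cs 𝔄 φ H) (P : Set W) (δ : W → W) (μ : W → ℤ) :
    Prop :=
  h.IsRightCellularPair P δ μ ∧ ∀ w ∈ P, h.leftEquiv P (δ w) w

/-- `a` is Lusztig's `a`-function of `(W_P, P, φ_P)`:
`a(z) = max_{x,y ∈ W_P} deg h_{x,y,z}`. -/
def IsAFun (h : Hecke cs 𝔄 φ H) (P : Set W) (a : W → 𝔄) : Prop :=
  ∀ z ∈ P, IsGreatest
    {d : 𝔄 | ∃ x ∈ P, ∃ y ∈ P, d ∈ (h.C.repr (h.C x * h.C y) z).coeff.support} (a z)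

/-- Lusztig's Conjecture P1 for `(W_P, P, φ_P)`: `a(z) ≤ Δ(z) = -val p*_{1,z}`. -/
def ConjP1 (h : Hecke cs 𝔄 φ H) (P : Set W) (a : W → 𝔄) : Prop :=
  ∀ z ∈ P, ∃ d ∈ (h.T.repr (h.C z) 1).coeff.support, d ≤ -(a z)

/-- Lusztig's Conjecture P4 for `(W_P, P, φ_P)`: `z' ≤_LR z ⟹ a(z') ≥ a(z)`. -/
def ConjP4 (h : Hecke cs 𝔄 φ H) (P : Set W) (a : W → 𝔄) : Prop :=
  ∀ z z' : W, z ∈ P → z' ∈ P → h.lrLE P z' z → a z ≤ a z'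

/-- Lusztig's Conjecture P8 for `(W_P, P, φ_P)`: `h_{x,y,z} ≠ 0` implies
`x ∼_L y⁻¹`, `y ∼_L z` and `x ∼_R z`. -/
def ConjP8 (h : Hecke cs 𝔄 φ H) (P : Set W) : Prop :=
  ∀ x y z : W, x ∈ P → y ∈ P → z ∈ P → h.C.repr (h.C x * h.C y) z ≠ 0 →
    h.leftEquiv P x y⁻¹ ∧ h.leftEquiv P y z ∧ h.rightEquiv P x z

/-- Lusztig's Conjecture P9 for `(W_P, P, φ_P)`: `z' ≤_L z` and `a(z') = a(z)` imply
`z' ∼_L z`. -/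
def ConjP9 (h : Hecke cs 𝔄 φ H) (P : Set W) (a : W → 𝔄) : Prop :=
  ∀ z z' : W, z ∈ P → z' ∈ P → h.leftLE P z' z → a z' = a z → h.leftEquiv P z' z

/-- `w0` is the longest element of `W_P`. -/
def IsLongest (cs : CoxeterSystem M W) (P : Set W) (w0 : W) : Prop :=
  w0 ∈ P ∧ ∀ u ∈ P, cs.length u ≤ cs.length w0

/-- The characterization of the Mathas–Lusztig maps `λ_I`, `ρ_I`, `η^I` of
`(W_I, I, φ_I)` (Theorem 4.3 of the paper), for `P = W_I`, `wI` the longest element of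
`W_I` and `aI` Lusztig's `a`-function of `(W_I, I, φ_I)`:
`v^{α_I(w)} T_{w_I} C_w ≡ η^I_w C_{ρ_I(w)}` and
`v^{α_I(w)} C_w T_{w_I} ≡ η^I_w C_{λ_I(w)}` modulo `H_I^{<_LR w}`, where
`α_I(w) = a_I(w_I w) - a_I(w)`. -/
def IsMLTriple (h : Hecke cs 𝔄 φ H) (P : Set W) (wI : W) (aI : W → 𝔄)
    (lam rho : W → W) (η : W → ℤ) : Prop :=
  IsSignMap η ∧
  (∀ w ∈ P, lam w ∈ P ∧ rho w ∈ P) ∧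
  ∀ w ∈ P,
    v (aI (wI * w) - aI w) • (h.T wI * h.C w) - η w • h.C (rho w) ∈
      Submodule.span (GA 𝔄)
        (h.C '' {u | u ∈ P ∧ h.lrLE P u w ∧ ¬ h.lrLE P w u}) ∧
    v (aI (wI * w) - aI w) • (h.C w * h.T wI) - η w • h.C (lam w) ∈
      Submodule.span (GA 𝔄)
        (h.C '' {u | u ∈ P ∧ h.lrLE P u w ∧ ¬ h.lrLE P w u})

/-! ### Auxiliary lemmas -/

section Aux

variable (h : Hecke cs 𝔄 φ H)

lemma bar_one : h.bar 1 = 1 := by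
  have e := h.bar_mul (h.bar 1) 1
  rw [mul_one, h.bar_invol, one_mul] at e
  exact e.symm

lemma repr_smul (a : GA 𝔄) (z : H) (x : W) :
    h.T.repr (a • z) x = a * h.T.repr z x := by
  rw [map_smul]
  rfl

lemma reprC_smul (a : GA 𝔄) (z : H) (x : W) :
    h.C.repr (a • z) x = a * h.C.repr z x := by
  rw [map_smul]
  rfl

lemma Ts_sq (i : B) :
    h.T (cs.simple i) * h.T (cs.simple i)
      = 1 + (v (φ i) - v (-(φ i))) • h.T (cs.simple i) := by
  have q := h.T_quad i
  have e1 : h.T (cs.simple i) * (v (-(φ i)) • (1 : H)) = v (-(φ i)) • h.T (cs.simple i) := by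
    rw [h.mul_smul, mul_one]
  have e2 : (v (φ i) • (1 : H)) * h.T (cs.simple i) = v (φ i) • h.T (cs.simple i) := by
    rw [h.smul_mul, one_mul]
  have e3 : (v (φ i) • (1 : H)) * (v (-(φ i)) • (1 : H)) = 1 := by
    rw [h.smul_mul, h.mul_smul, one_mul, smul_smul, v_mul]
    rw [show φ i + -(φ i) = 0 by simp, v_zero, one_smul]
  rw [mul_add, sub_mul, sub_mul, e1, e2, e3] at q
  have e0 : h.T (cs.simple i) * h.T (cs.simple i) - v (φ i) • h.T (cs.simple i)
      + (v (-(φ i)) • h.T (cs.simple i) - 1)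
      = (h.T (cs.simple i) * h.T (cs.simple i) + v (-(φ i)) • h.T (cs.simple i))
        - (v (φ i) • h.T (cs.simple i) + 1) := by abel
  rw [e0] at q
  have q2 := sub_eq_zero.mp q
  have q3 := eq_sub_of_add_eq q2
  rw [sub_smul, q3]
  abel

lemma T_simple_mul_up {i : B} {u : W}
    (hu : cs.length (cs.simple i * u) = cs.length u + 1) :
    h.T (cs.simple i) * h.T u = h.T (cs.simple i * u) :=
  h.T_mul _ _ (by rw [cs.length_simple, hu]; ring)

lemma T_mul_simple_up {i : B} {u : W}
    (hu : cs.length (u * cs.simple i) = cs.length u + 1) :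
    h.T u * h.T (cs.simple i) = h.T (u * cs.simple i) :=
  h.T_mul _ _ (by rw [cs.length_simple, hu])

lemma T_simple_mul_down {i : B} {u : W}
    (hd : cs.length (cs.simple i * u) + 1 = cs.length u) :
    h.T (cs.simple i) * h.T u
      = h.T (cs.simple i * u) + (v (φ i) - v (-(φ i))) • h.T u := by
  set u' := cs.simple i * u with hu'
  have hcan : cs.simple i * u' = u := by rw [hu', cs.simple_mul_simple_cancel_left]
  have hup : cs.length (cs.simple i * u') = cs.length u' + 1 := by rw [hcan]; omega
  have e : h.T u = h.T (cs.simple i) * h.T u' := by rw [h.T_simple_mul_up hup, hcan]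
  rw [e, ← mul_assoc, h.Ts_sq i, add_mul, one_mul, h.smul_mul, ← e]

lemma T_mul_simple_down {i : B} {u : W}
    (hd : cs.length (u * cs.simple i) + 1 = cs.length u) :
    h.T u * h.T (cs.simple i)
      = h.T (u * cs.simple i) + (v (φ i) - v (-(φ i))) • h.T u := by
  set u' := u * cs.simple i with hu'
  have hcan : u' * cs.simple i = u := by rw [hu', cs.simple_mul_simple_cancel_right]
  have hup : cs.length (u' * cs.simple i) = cs.length u' + 1 := by rw [hcan]; omega
  have e : h.T u = h.T u' * h.T (cs.simple i) := by rw [h.T_mul_simple_up hup, hcan]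
  rw [e, mul_assoc, h.Ts_sq i, mul_add, mul_one, h.mul_smul, ← e]

/-- Expansion of any element in the standard basis. -/
lemma T_expand (z : H) : z = (h.T.repr z).sum fun u c => c • h.T u := by
  conv_lhs => rw [← Module.Basis.linearCombination_repr h.T z]
  rw [Finsupp.linearCombination_apply]

lemma repr_mul_left (y z : H) (x : W) :
    h.T.repr (y * z) x = (h.T.repr z).sum fun u c => c * h.T.repr (y * h.T u) x := by
  have e : y * z = (h.T.repr z).sum fun u c => c • (y * h.T u) := by
    conv_lhs => rw [h.T_expand z, Finsupp.mul_sum]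
    exact Finsupp.sum_congr fun u _ => h.mul_smul _ _ _
  rw [e, map_finsuppSum, Finsupp.sum_apply]
  exact Finsupp.sum_congr fun u _ => by rw [map_smul]; rfl

lemma repr_mul_right (y z : H) (x : W) :
    h.T.repr (z * y) x = (h.T.repr z).sum fun u c => c * h.T.repr (h.T u * y) x := by
  have e : z * y = (h.T.repr z).sum fun u c => c • (h.T u * y) := by
    conv_lhs => rw [h.T_expand z, Finsupp.sum_mul]
    exact Finsupp.sum_congr fun u _ => h.smul_mul _ _ _
  rw [e, map_finsuppSum, Finsupp.sum_apply]
  exact Finsupp.sum_congr fun u _ => by rw [map_smul]; rfl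

lemma repr_Ts_T (i : B) (u x : W) :
    h.T.repr (h.T (cs.simple i) * h.T u) x
      = (if u = cs.simple i * x then 1 else 0)
        + (if cs.length (cs.simple i * u) < cs.length u then v (φ i) - v (-(φ i)) else 0)
          * (if u = x then 1 else 0) := by
  have key : u = cs.simple i * x ↔ cs.simple i * u = x := by
    constructor
    · rintro rfl; rw [cs.simple_mul_simple_cancel_left]
    · rintro rfl; rw [cs.simple_mul_simple_cancel_left]
  rcases cs.length_simple_mul u i with hup | hdown
  · have hc : ¬ cs.length (cs.simple i * u) < cs.length u := by omega
    rw [h.T_simple_mul_up hup, if_neg hc, zero_mul, add_zero, Module.Basis.repr_self]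
    rw [Finsupp.single_apply, ← key]
  · have hc : cs.length (cs.simple i * u) < cs.length u := by omega
    rw [h.T_simple_mul_down hdown, if_pos hc, map_add, Finsupp.add_apply,
      Module.Basis.repr_self, repr_smul, Module.Basis.repr_self, Finsupp.single_apply, Finsupp.single_apply,
      ← key]

lemma repr_T_Ts (i : B) (u x : W) :
    h.T.repr (h.T u * h.T (cs.simple i)) x
      = (if u = x * cs.simple i then 1 else 0)
        + (if cs.length (u * cs.simple i) < cs.length u then v (φ i) - v (-(φ i)) else 0)
          * (if u = x then 1 else 0) := by
  have key : u = x * cs.simple i ↔ u * cs.simple i = x := by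
    constructor
    · rintro rfl; rw [cs.simple_mul_simple_cancel_right]
    · rintro rfl; rw [cs.simple_mul_simple_cancel_right]
  rcases cs.length_mul_simple u i with hup | hdown
  · have hc : ¬ cs.length (u * cs.simple i) < cs.length u := by omega
    rw [h.T_mul_simple_up hup, if_neg hc, zero_mul, add_zero, Module.Basis.repr_self]
    rw [Finsupp.single_apply, ← key]
  · have hc : cs.length (u * cs.simple i) < cs.length u := by omega
    rw [h.T_mul_simple_down hdown, if_pos hc, map_add, Finsupp.add_apply,
      Module.Basis.repr_self, repr_smul, Module.Basis.repr_self, Finsupp.single_apply, Finsupp.single_apply,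
      ← key]

/-- Master formula: coefficients of `T_s · z` in terms of those of `z`. -/
lemma repr_Ts_mul (i : B) (z : H) (x : W) :
    h.T.repr (h.T (cs.simple i) * z) x
      = h.T.repr z (cs.simple i * x)
        + (if cs.length (cs.simple i * x) < cs.length x then v (φ i) - v (-(φ i)) else 0)
          * h.T.repr z x := by
  rw [h.repr_mul_left, Finsupp.sum]
  have e : ∀ u ∈ (h.T.repr z).support,
      h.T.repr z u * h.T.repr (h.T (cs.simple i) * h.T u) x
        = (if u = cs.simple i * x then h.T.repr z u else 0)
          + (if u = x then (if cs.length (cs.simple i * x) < cs.length x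
              then v (φ i) - v (-(φ i)) else 0) * h.T.repr z u else 0) := by
    intro u _
    rw [h.repr_Ts_T]
    rcases eq_or_ne u (cs.simple i * x) with h1 | h1
    · rcases eq_or_ne u x with h2 | h2
      · exact absurd (congrArg cs.length (h1 ▸ h2 : cs.simple i * x = x))
          (cs.length_simple_mul_ne x i)
      · subst h1; simp [h2]
    · rcases eq_or_ne u x with h2 | h2
      · subst h2; simp [h1]; ring
      · simp [h1, h2]
  rw [Finset.sum_congr rfl e, Finset.sum_add_distrib,
    Finset.sum_ite_eq' (h.T.repr z).support (cs.simple i * x) (fun u => h.T.repr z u),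
    Finset.sum_ite_eq' (h.T.repr z).support x
      (fun u => (if cs.length (cs.simple i * x) < cs.length x
        then v (φ i) - v (-(φ i)) else 0) * h.T.repr z u)]
  congr 1
  · by_cases hm : (cs.simple i * x) ∈ (h.T.repr z).support
    · rw [if_pos hm]
    · rw [if_neg hm, Finsupp.notMem_support_iff.mp hm]
  · by_cases hm : x ∈ (h.T.repr z).support
    · rw [if_pos hm]
    · rw [if_neg hm, Finsupp.notMem_support_iff.mp hm, mul_zero]

lemma repr_mul_Ts (i : B) (z : H) (x : W) :
    h.T.repr (z * h.T (cs.simple i)) x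
      = h.T.repr z (x * cs.simple i)
        + (if cs.length (x * cs.simple i) < cs.length x then v (φ i) - v (-(φ i)) else 0)
          * h.T.repr z x := by
  rw [h.repr_mul_right, Finsupp.sum]
  have e : ∀ u ∈ (h.T.repr z).support,
      h.T.repr z u * h.T.repr (h.T u * h.T (cs.simple i)) x
        = (if u = x * cs.simple i then h.T.repr z u else 0)
          + (if u = x then (if cs.length (x * cs.simple i) < cs.length x
              then v (φ i) - v (-(φ i)) else 0) * h.T.repr z u else 0) := by
    intro u _
    rw [h.repr_T_Ts]
    rcases eq_or_ne u (x * cs.simple i) with h1 | h1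
    · rcases eq_or_ne u x with h2 | h2
      · exact absurd (congrArg cs.length (h1 ▸ h2 : x * cs.simple i = x))
          (cs.length_mul_simple_ne x i)
      · subst h1; simp [h2]
    · rcases eq_or_ne u x with h2 | h2
      · subst h2; simp [h1]; ring
      · simp [h1, h2]
  rw [Finset.sum_congr rfl e, Finset.sum_add_distrib,
    Finset.sum_ite_eq' (h.T.repr z).support (x * cs.simple i) (fun u => h.T.repr z u),
    Finset.sum_ite_eq' (h.T.repr z).support x
      (fun u => (if cs.length (x * cs.simple i) < cs.length x
        then v (φ i) - v (-(φ i)) else 0) * h.T.repr z u)]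
  congr 1
  · by_cases hm : (x * cs.simple i) ∈ (h.T.repr z).support
    · rw [if_pos hm]
    · rw [if_neg hm, Finsupp.notMem_support_iff.mp hm]
  · by_cases hm : x ∈ (h.T.repr z).support
    · rw [if_pos hm]
    · rw [if_neg hm, Finsupp.notMem_support_iff.mp hm, mul_zero]

end Aux

/-- Triangularity of the KL basis with respect to the standard basis. -/
def Triang (h : Hecke cs 𝔄 φ H) (w : W) : Prop :=
  h.T.repr (h.C w) w = 1 ∧
    ∀ u, h.T.repr (h.C w) u ≠ 0 → cs.length u < cs.length w ∨ u = w

section Aux2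

variable (h : Hecke cs 𝔄 φ H)

lemma C_T_ne {w u : W} (hne : u ≠ w) : Aneg (h.T.repr (h.C w) u) := by
  have e := h.C_T w u
  rw [map_sub, Finsupp.sub_apply, Module.Basis.repr_self, Finsupp.single_apply,
    if_neg (fun hc => hne hc.symm), sub_zero] at e
  exact e

lemma C_T_self (w : W) : Aneg (h.T.repr (h.C w) w - 1) := by
  have e := h.C_T w w
  rwa [map_sub, Finsupp.sub_apply, Module.Basis.repr_self, Finsupp.single_apply, if_pos rfl] at e

lemma bar_T_triang : ∀ n : ℕ, ∀ w : W, cs.length w = n →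
    h.T.repr (h.bar (h.T w)) w = 1 ∧
    (∀ u, h.T.repr (h.bar (h.T w)) u ≠ 0 → cs.length u < cs.length w ∨ u = w) := by
  intro n
  induction n using Nat.strong_induction_on with
  | _ n IH =>
    intro w hw
    rcases eq_or_ne w 1 with rfl | hne
    · rw [h.T_one, h.bar_one, ← h.T_one, Module.Basis.repr_self]
      constructor
      · rw [Finsupp.single_apply, if_pos rfl]
      · intro u hu
        rw [Finsupp.single_apply] at hu
        right
        by_contra hc
        rw [if_neg (fun hc2 => hc hc2.symm)] at hu
        exact hu rfl
    · obtain ⟨i, hd⟩ := cs.exists_leftDescent_of_ne_one hne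
      rw [cs.isLeftDescent_iff] at hd
      set w₀ := cs.simple i * w with hw₀
      have hcan : cs.simple i * w₀ = w := by rw [hw₀, cs.simple_mul_simple_cancel_left]
      have hup : cs.length (cs.simple i * w₀) = cs.length w₀ + 1 := by rw [hcan]; omega
      have hTw : h.T w = h.T (cs.simple i) * h.T w₀ := by rw [h.T_simple_mul_up hup, hcan]
      set z := h.bar (h.T w₀) with hz
      obtain ⟨IH1, IH2⟩ := IH (cs.length w₀) (by omega) w₀ rfl
      have hexp : h.bar (h.T w) = h.T (cs.simple i) * z + (v (-(φ i)) - v (φ i)) • z := by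
        rw [hTw, h.bar_mul, h.bar_T, add_mul, h.smul_mul, one_mul]
      have hrepr : ∀ x, h.T.repr (h.bar (h.T w)) x
          = h.T.repr z (cs.simple i * x)
            + (if cs.length (cs.simple i * x) < cs.length x then v (φ i) - v (-(φ i)) else 0)
              * h.T.repr z x
            + (v (-(φ i)) - v (φ i)) * h.T.repr z x := by
        intro x
        rw [hexp, map_add, Finsupp.add_apply, h.repr_Ts_mul, h.repr_smul]
      constructor
      · rw [hrepr w, ← hw₀, IH1]
        have hz0 : h.T.repr z w = 0 := by
          by_contra hc
          rcases IH2 w hc with hlt | heq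
          · omega
          · rw [heq] at hd; omega
        rw [hz0, mul_zero, mul_zero, add_zero, add_zero]
      · intro u hu
        rw [hrepr u] at hu
        rcases eq_or_ne u w with rfl | hneu
        · right; rfl
        · left
          have key : h.T.repr z (cs.simple i * u) ≠ 0 ∨ h.T.repr z u ≠ 0 := by
            by_contra hc
            push_neg at hc
            rw [hc.1, hc.2, mul_zero, mul_zero, add_zero, add_zero] at hu
            exact hu rfl
          rcases key with hk | hk
          · rcases IH2 _ hk with hlt | heq
            · have := cs.length_simple_mul u i
              omega
            · exfalso
              apply hneu
              rw [← hcan, ← heq, cs.simple_mul_simple_cancel_left]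
          · rcases IH2 _ hk with hlt | heq
            · omega
            · rw [heq]; omega

lemma repr_bar (z : H) (x : W) :
    h.T.repr (h.bar z) x
      = (h.T.repr z).sum fun u c => Abar c * h.T.repr (h.bar (h.T u)) x := by
  have e : h.bar z = (h.T.repr z).sum fun u c => Abar c • h.bar (h.T u) := by
    conv_lhs => rw [h.T_expand z]
    rw [map_finsuppSum]
    exact Finsupp.sum_congr fun u _ => h.bar_smul _ _
  rw [e, map_finsuppSum, Finsupp.sum_apply]
  exact Finsupp.sum_congr fun u _ => by rw [map_smul]; rfl

/-- A bar-invariant element all of whose coefficients lie in `A_{<0}` is zero. -/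
lemma bar_vanish (x : H) (hbar : h.bar x = x) (hneg : ∀ u, Aneg (h.T.repr x u)) : x = 0 := by
  by_contra hx
  have hs : (h.T.repr x).support.Nonempty := by
    rw [Finsupp.support_nonempty_iff]
    intro hc
    exact hx (by rwa [LinearEquiv.map_eq_zero_iff] at hc)
  obtain ⟨u₀, hu₀, hmax⟩ := Finset.exists_max_image (h.T.repr x).support cs.length hs
  have e : h.T.repr x u₀ = Abar (h.T.repr x u₀) * h.T.repr (h.bar (h.T u₀)) u₀ := by
    conv_lhs => rw [← hbar]
    rw [h.repr_bar, Finsupp.sum]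
    apply Finset.sum_eq_single u₀
    · intro u hu hneq
      by_cases hz : h.T.repr (h.bar (h.T u)) u₀ = 0
      · rw [hz, mul_zero]
      · rcases (h.bar_T_triang (cs.length u) u rfl).2 u₀ hz with hlt | heq
        · exact absurd (hmax u hu) (by omega)
        · exact absurd heq.symm hneq
    · intro hc
      exact absurd hu₀ hc
  rw [(h.bar_T_triang (cs.length u₀) u₀ rfl).1, mul_one] at e
  have : h.T.repr x u₀ = 0 :=
    Aneg_bar_invariant_eq_zero (hneg u₀) e.symm
  exact (Finsupp.mem_support_iff.mp hu₀) this

/-- The correction process: any element can be corrected, by a bar-invariant combination of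
`C_u` with `ℓ(u) < k`, to have all coefficients of degree `< k` in `A_{<0}`. -/
lemma corr : ∀ k : ℕ, (∀ w', cs.length w' < k → h.Triang w') → ∀ x : H,
    ∃ y : H, h.bar y = y ∧ (∀ u, cs.length u < k → Aneg (h.T.repr (x - y) u)) ∧
      (∀ u, ¬ cs.length u < k → h.T.repr y u = 0) := by
  intro k
  induction k with
  | zero =>
    intro _ x
    exact ⟨0, map_zero _, fun u hu => by omega, fun u _ => by rw [map_zero]; rfl⟩
  | succ k IH =>
    intro htri x
    set F := (h.T.repr x).support.filter (fun u => cs.length u = k) with hF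
    set y₁ := ∑ u ∈ F, sym (h.T.repr x u) • h.C u with hy₁
    have hbary₁ : h.bar y₁ = y₁ := by
      rw [hy₁, map_sum]
      apply Finset.sum_congr rfl
      intro u _
      rw [h.bar_smul, Abar_sym, h.C_bar]
    have hreprY : ∀ x₀, h.T.repr y₁ x₀ = ∑ u ∈ F, sym (h.T.repr x u) * h.T.repr (h.C u) x₀ := by
      intro x₀
      rw [hy₁, map_sum, Finset.sum_apply']
      apply Finset.sum_congr rfl
      intro u _
      rw [map_smul]
      rfl
    have hY_high : ∀ x₀, cs.length x₀ > k → h.T.repr y₁ x₀ = 0 := by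
      intro x₀ hx₀
      rw [hreprY]
      apply Finset.sum_eq_zero
      intro u hu
      have huk : cs.length u = k := (Finset.mem_filter.mp hu).2
      have htriu := htri u (by omega)
      by_cases hz : h.T.repr (h.C u) x₀ = 0
      · rw [hz, mul_zero]
      · rcases htriu.2 x₀ hz with hlt | heq
        · omega
        · subst heq; omega
    have hY_k : ∀ x₀, cs.length x₀ = k →
        h.T.repr y₁ x₀ = if x₀ ∈ F then sym (h.T.repr x x₀) else 0 := by
      intro x₀ hx₀
      rw [hreprY]
      rw [show (∑ u ∈ F, sym (h.T.repr x u) * h.T.repr (h.C u) x₀)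
          = ∑ u ∈ F, if u = x₀ then sym (h.T.repr x u) else 0 from ?_, Finset.sum_ite_eq' F x₀ _]
      apply Finset.sum_congr rfl
      intro u hu
      have huk : cs.length u = k := (Finset.mem_filter.mp hu).2
      have htriu := htri u (by omega)
      rcases eq_or_ne u x₀ with rfl | hneq
      · rw [if_pos rfl, htriu.1, mul_one]
      · rw [if_neg hneq]
        by_cases hz : h.T.repr (h.C u) x₀ = 0
        · rw [hz, mul_zero]
        · rcases htriu.2 x₀ hz with hlt | heq
          · omega
          · exact absurd heq.symm hneq
    obtain ⟨y₂, hbar2, hneg2, hhigh2⟩ := IH (fun w' hw' => htri w' (by omega)) (x - y₁)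
    refine ⟨y₁ + y₂, by rw [map_add, hbary₁, hbar2], ?_, ?_⟩
    · intro u hu
      have he : x - (y₁ + y₂) = (x - y₁) - y₂ := by abel
      rcases Nat.lt_or_ge (cs.length u) k with hlt | hge
      · rw [he]
        exact hneg2 u hlt
      · have huk : cs.length u = k := by omega
        rw [he, map_sub, Finsupp.sub_apply, hhigh2 u (by omega), sub_zero, map_sub,
          Finsupp.sub_apply, hY_k u huk]
        split_ifs with hm
        · exact Aneg_sub_sym _
        · have : h.T.repr x u = 0 := by
            by_contra hc
            exact hm (Finset.mem_filter.mpr ⟨Finsupp.mem_support_iff.mpr hc, huk⟩)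
          rw [this, sub_zero]
          exact Aneg_zero
    · intro u hu
      rw [map_add, Finsupp.add_apply, hY_high u (by omega), hhigh2 u (by omega), add_zero]

/-- Every KL basis element is triangular with respect to the standard basis. -/
lemma triang_all (w : W) : h.Triang w := by
  suffices key : ∀ n : ℕ, ∀ w : W, cs.length w = n → h.Triang w from key (cs.length w) w rfl
  intro n
  induction n using Nat.strong_induction_on with
  | _ n IH =>
    intro w hw
    rcases eq_or_ne w 1 with rfl | hne
    · have hC1 : h.C 1 = h.T 1 := by
        have hvan := h.bar_vanish (h.C 1 - h.T 1) ?_ (h.C_T 1)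
        · rw [sub_eq_zero] at hvan; exact hvan
        · rw [map_sub, h.C_bar, h.T_one, h.bar_one]
      constructor
      · rw [hC1, Module.Basis.repr_self, Finsupp.single_apply, if_pos rfl]
      · intro u hu
        right
        rw [hC1, Module.Basis.repr_self, Finsupp.single_apply] at hu
        by_contra hc
        rw [if_neg (fun hc2 => hc hc2.symm)] at hu
        exact hu rfl
    · obtain ⟨i, hd⟩ := cs.exists_leftDescent_of_ne_one hne
      rw [cs.isLeftDescent_iff] at hd
      set w₀ := cs.simple i * w with hw₀
      have hcan : cs.simple i * w₀ = w := by rw [hw₀, cs.simple_mul_simple_cancel_left]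
      have hlen₀ : cs.length w₀ + 1 = cs.length w := hd
      obtain ⟨T1, T2⟩ := IH (cs.length w₀) (by omega) w₀ rfl
      set D := (h.T (cs.simple i) + v (-(φ i)) • 1) * h.C w₀ with hD
      have hbarD : h.bar D = D := by
        rw [hD, h.bar_mul, h.C_bar, map_add, h.bar_T, h.bar_smul, h.bar_one, Abar_v, neg_neg]
        congr 1
        rw [sub_smul]
        abel
      have hreprD : ∀ x₀, h.T.repr D x₀
          = h.T.repr (h.C w₀) (cs.simple i * x₀)
            + (if cs.length (cs.simple i * x₀) < cs.length x₀ then v (φ i) else v (-(φ i)))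
              * h.T.repr (h.C w₀) x₀ := by
        intro x₀
        rw [hD, add_mul, h.smul_mul, one_mul, map_add, Finsupp.add_apply, h.repr_Ts_mul,
          h.repr_smul]
        split_ifs with hc
        · ring
        · ring
      have hD3 : h.T.repr D w = 1 := by
        rw [hreprD w, ← hw₀, T1]
        have hz0 : h.T.repr (h.C w₀) w = 0 := by
          by_contra hc
          rcases T2 w hc with hlt | heq
          · omega
          · rw [heq] at hd; omega
        rw [hz0, mul_zero, add_zero]
      have hD2 : ∀ x₀, h.T.repr D x₀ ≠ 0 → x₀ = w ∨ cs.length x₀ < cs.length w := by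
        intro x₀ hx₀
        rw [hreprD x₀] at hx₀
        have key : h.T.repr (h.C w₀) (cs.simple i * x₀) ≠ 0 ∨ h.T.repr (h.C w₀) x₀ ≠ 0 := by
          by_contra hc
          push_neg at hc
          rw [hc.1, hc.2, mul_zero, add_zero] at hx₀
          exact hx₀ rfl
        rcases key with hk | hk
        · rcases T2 _ hk with hlt | heq
          · right
            have := cs.length_simple_mul x₀ i
            omega
          · left
            rw [← hcan, ← heq, cs.simple_mul_simple_cancel_left]
        · rcases T2 _ hk with hlt | heq
          · right; omega
          · right; rw [heq]; omega
      obtain ⟨y, hbary, hnegy, hhighy⟩ :=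
        h.corr (cs.length w) (fun w' hw' => IH (cs.length w') (by omega) w' rfl) D
      have hCw : h.C w = D - y := by
        have hvan := h.bar_vanish (h.C w - (D - y)) ?_ ?_
        · rw [sub_eq_zero] at hvan; exact hvan
        · rw [map_sub, h.C_bar, map_sub, hbarD, hbary]
        · intro u
          rw [map_sub, Finsupp.sub_apply, map_sub, Finsupp.sub_apply]
          rcases eq_or_ne u w with rfl | hneu
          · rw [hD3, hhighy u (by omega), sub_zero]
            exact h.C_T_self u
          · rcases Nat.lt_or_ge (cs.length u) (cs.length w) with hlt | hge
            · have h2 : Aneg (h.T.repr D u - h.T.repr y u) := by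
                have := hnegy u hlt
                rwa [map_sub, Finsupp.sub_apply] at this
              exact Aneg_sub (h.C_T_ne hneu) h2
            · have hD0 : h.T.repr D u = 0 := by
                by_contra hc
                rcases hD2 u hc with rfl | hlt2
                · exact hneu rfl
                · omega
              rw [hD0, hhighy u (by omega), sub_zero, sub_zero]
              exact h.C_T_ne hneu
      constructor
      · rw [hCw, map_sub, Finsupp.sub_apply, hD3, hhighy w (by omega), sub_zero]
      · intro u hu
        rw [hCw, map_sub, Finsupp.sub_apply] at hu
        have key : h.T.repr D u ≠ 0 ∨ h.T.repr y u ≠ 0 := by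
          by_contra hc
          push_neg at hc
          rw [hc.1, hc.2, sub_zero] at hu
          exact hu rfl
        rcases key with hk | hk
        · rcases hD2 u hk with rfl | hlt
          · right; rfl
          · left; exact hlt
        · left
          by_contra hc
          exact hk (hhighy u (by omega))

end Aux2

section Aux3

variable (h : Hecke cs 𝔄 φ H)

/-- Change of basis: `T`-coefficients from `C`-coefficients. -/
lemma conv (z : H) (x : W) :
    h.T.repr z x = (h.C.repr z).sum fun y c => c * h.T.repr (h.C y) x := by
  have e : z = (h.C.repr z).sum fun y c => c • h.C y := by
    conv_lhs => rw [← Module.Basis.linearCombination_repr h.C z]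
    rw [Finsupp.linearCombination_apply]
  conv_lhs => rw [e]
  rw [map_finsuppSum, Finsupp.sum_apply]
  exact Finsupp.sum_congr fun u _ => by rw [map_smul]; rfl

lemma suppC (z : H) (y : W) (hy : h.C.repr z y ≠ 0) :
    ∃ u, h.T.repr z u ≠ 0 ∧ cs.length y ≤ cs.length u := by
  have hs : (h.C.repr z).support.Nonempty := ⟨y, Finsupp.mem_support_iff.mpr hy⟩
  obtain ⟨y₀, hy₀, hmax⟩ := Finset.exists_max_image (h.C.repr z).support cs.length hs
  refine ⟨y₀, ?_, hmax y (Finsupp.mem_support_iff.mpr hy)⟩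
  have e : h.T.repr z y₀ = h.C.repr z y₀ := by
    rw [h.conv z y₀, Finsupp.sum]
    rw [Finset.sum_eq_single y₀ ?_ ?_]
    · rw [(h.triang_all y₀).1, mul_one]
    · intro b hb hneq
      by_cases hz : h.T.repr (h.C b) y₀ = 0
      · rw [hz, mul_zero]
      · rcases (h.triang_all b).2 y₀ hz with hlt | heq
        · exact absurd (hmax b hb) (by omega)
        · exact absurd heq.symm hneq
    · intro hc
      exact absurd hy₀ hc
  rw [e]
  exact Finsupp.mem_support_iff.mp hy₀

lemma topeq (z : H) (x : W) (htop : ∀ y', cs.length x < cs.length y' → h.C.repr z y' = 0) :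
    h.C.repr z x = h.T.repr z x := by
  rw [h.conv z x, Finsupp.sum]
  rw [Finset.sum_eq_single x ?_ ?_]
  · rw [(h.triang_all x).1, mul_one]
  · intro b hb hneq
    by_cases hz : h.T.repr (h.C b) x = 0
    · rw [hz, mul_zero]
    · rcases (h.triang_all b).2 x hz with hlt | heq
      · rw [htop b hlt, zero_mul]
      · exact absurd heq.symm hneq
  · intro hc
    rw [Finsupp.notMem_support_iff.mp hc, zero_mul]

/-- The key detection lemma: the coefficient of `v^{φ_i}` in the `C_x`-coordinate of
`(T_s - v^{φ_i}) C_x` detects whether `s_i` is a left descent of `x`. -/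
lemma key_left (i : B) (x : W) :
    (h.C.repr ((h.T (cs.simple i) - v (φ i) • 1) * h.C x) x).coeff (φ i)
      = if cs.length (cs.simple i * x) < cs.length x then 0 else -1 := by
  set z := (h.T (cs.simple i) - v (φ i) • 1) * h.C x with hz
  have master : ∀ x₀, h.T.repr z x₀
      = h.T.repr (h.C x) (cs.simple i * x₀)
        - (if cs.length (cs.simple i * x₀) < cs.length x₀ then v (-(φ i)) else v (φ i))
          * h.T.repr (h.C x) x₀ := by
    intro x₀
    rw [hz, sub_mul, h.smul_mul, one_mul, map_sub, Finsupp.sub_apply, h.repr_Ts_mul,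
      h.repr_smul]
    split_ifs with hc
    · ring
    · ring
  obtain ⟨Tx1, Tx2⟩ := h.triang_all x
  by_cases hdes : cs.length (cs.simple i * x) < cs.length x
  · rw [if_pos hdes]
    have S1 : ∀ x₀, h.T.repr z x₀ ≠ 0 → cs.length x₀ ≤ cs.length x := by
      intro x₀ h0
      rw [master x₀] at h0
      have key : h.T.repr (h.C x) (cs.simple i * x₀) ≠ 0 ∨ h.T.repr (h.C x) x₀ ≠ 0 := by
        by_contra hc
        push_neg at hc
        rw [hc.1, hc.2, mul_zero, sub_zero] at h0
        exact h0 rfl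
      rcases key with hk | hk
      · rcases Tx2 _ hk with hlt | heq
        · have := cs.length_simple_mul x₀ i
          omega
        · have : x₀ = cs.simple i * x := by
            rw [← heq, cs.simple_mul_simple_cancel_left]
          rw [this]
          omega
      · rcases Tx2 _ hk with hlt | heq
        · omega
        · rw [heq]
    have S2 : ∀ y, cs.length x < cs.length y → h.C.repr z y = 0 := by
      intro y hy
      by_contra hc
      obtain ⟨u, hu, hle⟩ := h.suppC z y hc
      exact absurd (S1 u hu) (by omega)
    have hsx_ne : cs.simple i * x ≠ x := by
      intro hc
      exact absurd (congrArg cs.length hc) (by omega)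
    rw [h.topeq z x S2, master x, if_pos hdes, Tx1, mul_one, AddMonoidAlgebra.coeff_sub, Finsupp.sub_apply]
    rw [Aneg_apply (h.C_T_ne hsx_ne) (le_of_lt (h.φ_pos i)),
      v_apply_ne (show -(φ i) ≠ φ i by
        have hp := h.φ_pos i
        intro hc
        have h2 : -(φ i) < 0 := neg_lt_zero.mpr hp
        rw [hc] at h2
        exact lt_asymm hp h2), sub_zero]
  · rw [if_neg hdes]
    have hup : cs.length (cs.simple i * x) = cs.length x + 1 := by
      have := cs.length_simple_mul x i
      omega
    set x' := cs.simple i * x with hx'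
    have hx'_ne : x' ≠ x := fun hc => absurd (congrArg cs.length hc) (by omega)
    have hcanx : cs.simple i * x' = x := by rw [hx', cs.simple_mul_simple_cancel_left]
    have S1 : ∀ x₀, h.T.repr z x₀ ≠ 0 → x₀ = x' ∨ cs.length x₀ ≤ cs.length x := by
      intro x₀ h0
      rw [master x₀] at h0
      have key : h.T.repr (h.C x) (cs.simple i * x₀) ≠ 0 ∨ h.T.repr (h.C x) x₀ ≠ 0 := by
        by_contra hc
        push_neg at hc
        rw [hc.1, hc.2, mul_zero, sub_zero] at h0
        exact h0 rfl
      rcases key with hk | hk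
      · rcases Tx2 _ hk with hlt | heq
        · right
          have := cs.length_simple_mul x₀ i
          omega
        · left
          rw [hx', ← heq, cs.simple_mul_simple_cancel_left]
      · rcases Tx2 _ hk with hlt | heq
        · right; omega
        · right; rw [heq]
    have B1 : ∀ y, h.C.repr z y ≠ 0 → cs.length y ≤ cs.length x + 1 := by
      intro y hy
      obtain ⟨u, hu, hle⟩ := h.suppC z y hy
      rcases S1 u hu with rfl | hle2
      · omega
      · omega
    have hTz_x' : h.T.repr z x' = 1 := by
      rw [master x', hcanx, Tx1]
      have h0 : h.T.repr (h.C x) x' = 0 := by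
        by_contra hc
        rcases Tx2 _ hc with hlt | heq
        · omega
        · exact hx'_ne heq
      rw [h0, mul_zero, sub_zero]
    have hCz_x' : h.C.repr z x' = 1 := by
      rw [h.topeq z x' (fun y' hy' => by
        by_contra hc
        have := B1 y' hc
        omega)]
      exact hTz_x'
    have hCz_top : ∀ y, y ≠ x' → cs.length x < cs.length y → h.C.repr z y = 0 := by
      intro y hyne hygt
      have hT0 : h.T.repr z y = 0 := by
        by_contra hc2
        rcases S1 y hc2 with rfl | hle
        · exact hyne rfl
        · omega
      rw [h.topeq z y (fun y' hy' => by
        by_contra hc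
        have := B1 y' hc
        omega)]
      exact hT0
    set z' := z - h.C.repr z x' • h.C x' with hz'
    have hC' : ∀ y, h.C.repr z' y = h.C.repr z y - (if x' = y then h.C.repr z x' else 0) := by
      intro y
      rw [hz', map_sub, Finsupp.sub_apply, map_smul, Module.Basis.repr_self, Finsupp.smul_apply,
        Finsupp.single_apply]
      congr 1
      split_ifs with hc
      · rw [smul_eq_mul, mul_one]
      · rw [smul_eq_mul, mul_zero]
    have htop' : ∀ y, cs.length x < cs.length y → h.C.repr z' y = 0 := by
      intro y hy
      rcases eq_or_ne y x' with rfl | hne2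
      · rw [hC', if_pos rfl, sub_self]
      · rw [hC', if_neg (fun hc => hne2 hc.symm), sub_zero]
        exact hCz_top y hne2 hy
    have e' := h.topeq z' x htop'
    rw [hC' x, if_neg hx'_ne, sub_zero] at e'
    have eT : h.T.repr z' x = h.T.repr z x - h.T.repr (h.C x') x := by
      rw [hz', map_sub, Finsupp.sub_apply, map_smul, hCz_x', Finsupp.smul_apply, smul_eq_mul,
        one_mul]
    have hTzx : h.T.repr z x = - v (φ i) := by
      rw [master x, if_neg hdes, Tx1, mul_one]
      have h0 : h.T.repr (h.C x) x' = 0 := by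
        by_contra hc
        rcases Tx2 _ hc with hlt | heq
        · omega
        · exact hx'_ne heq
      rw [← hx', h0, zero_sub]
    rw [e', eT, hTzx, AddMonoidAlgebra.coeff_sub, Finsupp.sub_apply, AddMonoidAlgebra.coeff_neg, Finsupp.neg_apply, v_apply_self,
      Aneg_apply (h.C_T_ne hx'_ne.symm) (le_of_lt (h.φ_pos i)), sub_zero]

/-- Mirror image of `key_left` for right multiplication. -/
lemma key_right (i : B) (x : W) :
    (h.C.repr (h.C x * (h.T (cs.simple i) - v (φ i) • 1)) x).coeff (φ i)
      = if cs.length (x * cs.simple i) < cs.length x then 0 else -1 := by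
  set z := h.C x * (h.T (cs.simple i) - v (φ i) • 1) with hz
  have master : ∀ x₀, h.T.repr z x₀
      = h.T.repr (h.C x) (x₀ * cs.simple i)
        - (if cs.length (x₀ * cs.simple i) < cs.length x₀ then v (-(φ i)) else v (φ i))
          * h.T.repr (h.C x) x₀ := by
    intro x₀
    rw [hz, mul_sub, h.mul_smul, mul_one, map_sub, Finsupp.sub_apply, h.repr_mul_Ts,
      h.repr_smul]
    split_ifs with hc
    · ring
    · ring
  obtain ⟨Tx1, Tx2⟩ := h.triang_all x
  by_cases hdes : cs.length (x * cs.simple i) < cs.length x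
  · rw [if_pos hdes]
    have S1 : ∀ x₀, h.T.repr z x₀ ≠ 0 → cs.length x₀ ≤ cs.length x := by
      intro x₀ h0
      rw [master x₀] at h0
      have key : h.T.repr (h.C x) (x₀ * cs.simple i) ≠ 0 ∨ h.T.repr (h.C x) x₀ ≠ 0 := by
        by_contra hc
        push_neg at hc
        rw [hc.1, hc.2, mul_zero, sub_zero] at h0
        exact h0 rfl
      rcases key with hk | hk
      · rcases Tx2 _ hk with hlt | heq
        · have := cs.length_mul_simple x₀ i
          omega
        · have : x₀ = x * cs.simple i := by
            rw [← heq, cs.simple_mul_simple_cancel_right]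
          rw [this]
          omega
      · rcases Tx2 _ hk with hlt | heq
        · omega
        · rw [heq]
    have S2 : ∀ y, cs.length x < cs.length y → h.C.repr z y = 0 := by
      intro y hy
      by_contra hc
      obtain ⟨u, hu, hle⟩ := h.suppC z y hc
      exact absurd (S1 u hu) (by omega)
    have hsx_ne : x * cs.simple i ≠ x := by
      intro hc
      exact absurd (congrArg cs.length hc) (by omega)
    rw [h.topeq z x S2, master x, if_pos hdes, Tx1, mul_one, AddMonoidAlgebra.coeff_sub, Finsupp.sub_apply]
    rw [Aneg_apply (h.C_T_ne hsx_ne) (le_of_lt (h.φ_pos i)),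
      v_apply_ne (show -(φ i) ≠ φ i by
        have hp := h.φ_pos i
        intro hc
        have h2 : -(φ i) < 0 := neg_lt_zero.mpr hp
        rw [hc] at h2
        exact lt_asymm hp h2), sub_zero]
  · rw [if_neg hdes]
    have hup : cs.length (x * cs.simple i) = cs.length x + 1 := by
      have := cs.length_mul_simple x i
      omega
    set x' := x * cs.simple i with hx'
    have hx'_ne : x' ≠ x := fun hc => absurd (congrArg cs.length hc) (by omega)
    have hcanx : x' * cs.simple i = x := by rw [hx', cs.simple_mul_simple_cancel_right]
    have S1 : ∀ x₀, h.T.repr z x₀ ≠ 0 → x₀ = x' ∨ cs.length x₀ ≤ cs.length x := by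
      intro x₀ h0
      rw [master x₀] at h0
      have key : h.T.repr (h.C x) (x₀ * cs.simple i) ≠ 0 ∨ h.T.repr (h.C x) x₀ ≠ 0 := by
        by_contra hc
        push_neg at hc
        rw [hc.1, hc.2, mul_zero, sub_zero] at h0
        exact h0 rfl
      rcases key with hk | hk
      · rcases Tx2 _ hk with hlt | heq
        · right
          have := cs.length_mul_simple x₀ i
          omega
        · left
          rw [hx', ← heq, cs.simple_mul_simple_cancel_right]
      · rcases Tx2 _ hk with hlt | heq
        · right; omega
        · right; rw [heq]
    have B1 : ∀ y, h.C.repr z y ≠ 0 → cs.length y ≤ cs.length x + 1 := by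
      intro y hy
      obtain ⟨u, hu, hle⟩ := h.suppC z y hy
      rcases S1 u hu with rfl | hle2
      · omega
      · omega
    have hTz_x' : h.T.repr z x' = 1 := by
      rw [master x', hcanx, Tx1]
      have h0 : h.T.repr (h.C x) x' = 0 := by
        by_contra hc
        rcases Tx2 _ hc with hlt | heq
        · omega
        · exact hx'_ne heq
      rw [h0, mul_zero, sub_zero]
    have hCz_x' : h.C.repr z x' = 1 := by
      rw [h.topeq z x' (fun y' hy' => by
        by_contra hc
        have := B1 y' hc
        omega)]
      exact hTz_x'
    have hCz_top : ∀ y, y ≠ x' → cs.length x < cs.length y → h.C.repr z y = 0 := by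
      intro y hyne hygt
      have hT0 : h.T.repr z y = 0 := by
        by_contra hc2
        rcases S1 y hc2 with rfl | hle
        · exact hyne rfl
        · omega
      rw [h.topeq z y (fun y' hy' => by
        by_contra hc
        have := B1 y' hc
        omega)]
      exact hT0
    set z' := z - h.C.repr z x' • h.C x' with hz'
    have hC' : ∀ y, h.C.repr z' y = h.C.repr z y - (if x' = y then h.C.repr z x' else 0) := by
      intro y
      rw [hz', map_sub, Finsupp.sub_apply, map_smul, Module.Basis.repr_self, Finsupp.smul_apply,
        Finsupp.single_apply]
      congr 1
      split_ifs with hc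
      · rw [smul_eq_mul, mul_one]
      · rw [smul_eq_mul, mul_zero]
    have htop' : ∀ y, cs.length x < cs.length y → h.C.repr z' y = 0 := by
      intro y hy
      rcases eq_or_ne y x' with rfl | hne2
      · rw [hC', if_pos rfl, sub_self]
      · rw [hC', if_neg (fun hc => hne2 hc.symm), sub_zero]
        exact hCz_top y hne2 hy
    have e' := h.topeq z' x htop'
    rw [hC' x, if_neg hx'_ne, sub_zero] at e'
    have eT : h.T.repr z' x = h.T.repr z x - h.T.repr (h.C x') x := by
      rw [hz', map_sub, Finsupp.sub_apply, map_smul, hCz_x', Finsupp.smul_apply, smul_eq_mul,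
        one_mul]
    have hTzx : h.T.repr z x = - v (φ i) := by
      rw [master x, if_neg hdes, Tx1, mul_one]
      have h0 : h.T.repr (h.C x) x' = 0 := by
        by_contra hc
        rcases Tx2 _ hc with hlt | heq
        · omega
        · exact hx'_ne heq
      rw [← hx', h0, zero_sub]
    rw [e', eT, hTzx, AddMonoidAlgebra.coeff_sub, Finsupp.sub_apply, AddMonoidAlgebra.coeff_neg, Finsupp.neg_apply, v_apply_self,
      Aneg_apply (h.C_T_ne hx'_ne.symm) (le_of_lt (h.φ_pos i)), sub_zero]

end Aux3

/-- **Proposition 4.3** (cells and cacti): let `(δ,μ)` be a left (respectively right)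
cellular pair and `w ∈ W`.  Then `ℒ(δ(w)) = ℒ(w)` (respectively `ℛ(δ(w)) = ℛ(w)`),
where `ℒ(w) = {s ∈ S | ℓ(sw) < ℓ(w)}` and `ℛ(w) = {s ∈ S | ℓ(ws) < ℓ(w)}` are the left
and right descent sets. -/
theorem prop_left_descent (h : Hecke cs 𝔄 φ H) (δ : W → W) (μ : W → ℤ) (w : W) :
    (h.IsLeftCellularPair Set.univ δ μ →
      ∀ i : B, cs.length (cs.simple i * δ w) < cs.length (δ w) ↔
        cs.length (cs.simple i * w) < cs.length w) ∧
    (h.IsRightCellularPair Set.univ δ μ →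
      ∀ i : B, cs.length (δ w * cs.simple i) < cs.length (δ w) ↔
        cs.length (w * cs.simple i) < cs.length w) := by
  have hspan : h.Cspan Set.univ = ⊤ := by
    show Submodule.span (GA 𝔄) (h.C '' Set.univ) = ⊤
    rw [Set.image_univ, Module.Basis.span_eq]
  constructor
  · rintro ⟨hsign, hcell⟩ i
    have hwG : w ∈ {x | h.leftEquiv Set.univ x w} :=
      show h.leftEquiv Set.univ w w from
        ⟨Relation.ReflTransGen.refl, Relation.ReflTransGen.refl⟩
    obtain ⟨-, -, hcoef⟩ := hcell {x | h.leftEquiv Set.univ x w} ⟨w, Set.mem_univ w, rfl⟩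
    have ha : (h.T (cs.simple i) - v (φ i) • 1) ∈ h.Cspan Set.univ := by
      rw [hspan]; exact Submodule.mem_top
    have he := hcoef _ ha w hwG w hwG
    have hmu : μ w * μ w = 1 := by rcases hsign w with h1 | h1 <;> rw [h1] <;> norm_num
    rw [hmu, one_smul] at he
    have hval : (h.C.repr ((h.T (cs.simple i) - v (φ i) • 1) * h.C w) w).coeff (φ i)
        = (h.C.repr ((h.T (cs.simple i) - v (φ i) • 1) * h.C (δ w)) (δ w)).coeff (φ i) :=
      congrArg (fun f => f.coeff (φ i)) he
    rw [h.key_left i w, h.key_left i (δ w)] at hval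
    constructor
    · intro hQ
      by_contra hP
      rw [if_neg hP, if_pos hQ] at hval
      norm_num at hval
    · intro hP
      by_contra hQ
      rw [if_pos hP, if_neg hQ] at hval
      norm_num at hval
  · rintro ⟨hsign, hcell⟩ i
    have hwG : w ∈ {x | h.rightEquiv Set.univ x w} :=
      show h.rightEquiv Set.univ w w from
        ⟨Relation.ReflTransGen.refl, Relation.ReflTransGen.refl⟩
    obtain ⟨-, -, hcoef⟩ := hcell {x | h.rightEquiv Set.univ x w} ⟨w, Set.mem_univ w, rfl⟩
    have ha : (h.T (cs.simple i) - v (φ i) • 1) ∈ h.Cspan Set.univ := by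
      rw [hspan]; exact Submodule.mem_top
    have he := hcoef _ ha w hwG w hwG
    have hmu : μ w * μ w = 1 := by rcases hsign w with h1 | h1 <;> rw [h1] <;> norm_num
    rw [hmu, one_smul] at he
    have hval : (h.C.repr (h.C w * (h.T (cs.simple i) - v (φ i) • 1)) w).coeff (φ i)
        = (h.C.repr (h.C (δ w) * (h.T (cs.simple i) - v (φ i) • 1)) (δ w)).coeff (φ i) :=
      congrArg (fun f => f.coeff (φ i)) he
    rw [h.key_right i w, h.key_right i (δ w)] at hval
    constructor
    · intro hQ
      by_contra hP
      rw [if_neg hP, if_pos hQ] at hval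
      norm_num at hval
    · intro hP
      by_contra hQ
      rw [if_pos hP, if_neg hQ] at hval
      norm_num at hval

end Hecke

end CellsCacti
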